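/- If f_1,...,f_m are concave nondecreasing functions on [0,∞)^2 (nondecreasing in each coordinate), and (P_1*,Q_1*),...,(P_m*,Q_m*) admit a common subgradient (k_p,k_q) for all f_i, with Σ P_i* = P and Σ Q_i* = Q, then for any nonnegative (P_l,Q_l) with Σ_l P_l ≤ P and Σ_l Q_l ≤ Q we have Σ_l f_l(P_l,Q_l) ≤ Σ_l f_l(P_l*,Q_l*). -/
import Mathlib


/-- common-subgradient optimality for concave nondecreasing
functions on [0,∞)² with budgets Σ Pₗ ≤ P, Σ Qₗ ≤ Q. -/
theorem sum_le_of_common_subgradient_monotone {m : ℕ}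
    (f : Fin m → ℝ → ℝ → ℝ)
    (hconc : ∀ l, ConcaveOn ℝ {x : ℝ × ℝ | 0 ≤ x.1 ∧ 0 ≤ x.2}
      (fun x => f l x.1 x.2))
    (hmono : ∀ l p p' q q', 0 ≤ p → p ≤ p' → 0 ≤ q → q ≤ q' →
      f l p q ≤ f l p' q')
    (Pstar Qstar : Fin m → ℝ)
    (hPstar : ∀ l, 0 ≤ Pstar l) (hQstar : ∀ l, 0 ≤ Qstar l)
    (kp kq P Q : ℝ)
    (hsub : ∀ l, ∀ p q, 0 ≤ p → 0 ≤ q →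
      f l p q - f l (Pstar l) (Qstar l) ≤ kp * (p - Pstar l) + kq * (q - Qstar l))
    (hsumP : ∑ l, Pstar l = P) (hsumQ : ∑ l, Qstar l = Q) :
    ∀ Pl Ql : Fin m → ℝ, (∀ l, 0 ≤ Pl l) → (∀ l, 0 ≤ Ql l) →
      (∑ l, Pl l) ≤ P → (∑ l, Ql l) ≤ Q →
      ∑ l, f l (Pl l) (Ql l) ≤ ∑ l, f l (Pstar l) (Qstar l) := by
  intro Pl Ql hPl hQl hP hQ
  rcases Nat.eq_zero_or_pos m with hm | hm
  · subst hm; simp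
  · have l0 : Fin m := ⟨0, hm⟩
    have hkp : 0 ≤ kp := by
      have h1 := hsub l0 (Pstar l0 + 1) (Qstar l0)
        (by linarith [hPstar l0]) (hQstar l0)
      have h2 := hmono l0 (Pstar l0) (Pstar l0 + 1) (Qstar l0) (Qstar l0)
        (hPstar l0) (by linarith) (hQstar l0) le_rfl
      nlinarith
    have hkq : 0 ≤ kq := by
      have h1 := hsub l0 (Pstar l0) (Qstar l0 + 1)
        (hPstar l0) (by linarith [hQstar l0])
      have h2 := hmono l0 (Pstar l0) (Pstar l0) (Qstar l0) (Qstar l0 + 1)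
        (hPstar l0) le_rfl (hQstar l0) (by linarith)
      nlinarith
    have key : ∑ l, f l (Pl l) (Ql l) - ∑ l, f l (Pstar l) (Qstar l)
        ≤ kp * ((∑ l, Pl l) - P) + kq * ((∑ l, Ql l) - Q) := by
      rw [← hsumP, ← hsumQ, ← Finset.sum_sub_distrib, ← Finset.sum_sub_distrib,
        ← Finset.sum_sub_distrib, Finset.mul_sum, Finset.mul_sum,
        ← Finset.sum_add_distrib]
      exact Finset.sum_le_sum fun l _ => hsub l _ _ (hPl l) (hQl l)
    nlinarith [mul_nonneg hkp (sub_nonneg.2 hP), mul_nonneg hkq (sub_nonneg.2 hQ)]
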